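/- Let W_K^+ be presented by ⟨a_1,...,a_d | a_i^{k_i} = 1 (for finite k_i), a_1⋯a_d = 1⟩ with some k_j = ∞. Then the element a_j has no nontrivial roots; in particular ⟨a_j⟩ is a maximal cyclic subgroup. -/

import Mathlib

/-- Relators for `⟨a_1,…,a_d ∣ a_i^{k_i} = 1 (k_i < ∞), a_1⋯a_d = 1⟩`,
where `k i = 0` encodes `k_i = ∞`. -/
def altRels (d : ℕ) (k : Fin d → ℕ) : Set (FreeGroup (Fin d)) :=
  {r | (∃ i, r = FreeGroup.of i ^ k i) ∨
    r = (List.ofFn (fun i : Fin d => FreeGroup.of i)).prod}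

namespace Stmt3Aux


section core
variable (m n : ℕ)

def tt : ℤ := (m : ℤ) + n - 3

def fc (k : ℤ) : ℤ :=
  if k < 0 then (-k - 1) * tt m n
  else if k % tt m n < (n : ℤ) - 2 then k + 1
  else if k % tt m n = (n : ℤ) - 2 then -(k / tt m n) - 1
  else k

def fb (k : ℤ) : ℤ :=
  if k < 0 then (-k - 1) * tt m n + ((n : ℤ) - 1)
  else if (n : ℤ) - 1 ≤ k % tt m n then k + 1
  else if k % tt m n = 0 ∧ 0 < k then -(k / tt m n)
  else k

variable {m n}
variable (hm : 2 ≤ m) (hn : 2 ≤ n)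

include hm hn

lemma ht : 1 ≤ tt m n := by
  unfold tt; omega

lemma qtr_emod (q r : ℤ) (hr : 0 ≤ r) (hr2 : r < tt m n) :
    (q * tt m n + r) % tt m n = r := by
  rw [show q * tt m n + r = r + tt m n * q by ring, Int.add_mul_emod_self_left,
    Int.emod_eq_of_lt hr hr2]

lemma qtr_ediv (q r : ℤ) (hr : 0 ≤ r) (hr2 : r < tt m n) :
    (q * tt m n + r) / tt m n = q := by
  rw [show q * tt m n + r = r + tt m n * q by ring,
    Int.add_mul_ediv_left _ _ (by have := ht hm hn; omega : tt m n ≠ 0),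
    Int.ediv_eq_zero_of_lt hr hr2, zero_add]

lemma fc_low (q r : ℤ) (hq : 0 ≤ q) (hr : 0 ≤ r) (hr2 : r < (n : ℤ) - 2) :
    fc m n (q * tt m n + r) = q * tt m n + r + 1 := by
  have h1 : r < tt m n := by unfold tt at *; omega
  have hk : ¬ (q * tt m n + r < 0) := by nlinarith [ht hm hn]
  unfold fc
  rw [if_neg hk, qtr_emod hm hn q r hr h1, if_pos hr2]

lemma fc_mid (q : ℤ) (hq : 0 ≤ q) :
    fc m n (q * tt m n + ((n:ℤ) - 2)) = -q - 1 := by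
  have h1 : (n:ℤ) - 2 < tt m n := by unfold tt; omega
  have hr : (0:ℤ) ≤ (n:ℤ) - 2 := by omega
  have hk : ¬ (q * tt m n + ((n:ℤ)-2) < 0) := by nlinarith [ht hm hn]
  unfold fc
  rw [if_neg hk, qtr_emod hm hn q _ hr h1, if_neg (by omega), if_pos rfl,
    qtr_ediv hm hn q _ hr h1]

omit hm hn in
lemma fc_neg (q : ℤ) (hq : 0 ≤ q) : fc m n (-q - 1) = q * tt m n := by
  unfold fc
  rw [if_pos (by omega)]
  ring_nf

omit hm hn in
lemma fc_high (k : ℤ) (hk : 0 ≤ k) (h : (n:ℤ) - 2 < k % tt m n) : fc m n k = k := by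
  unfold fc
  rw [if_neg (by omega), if_neg (by omega), if_neg (by omega)]

lemma fc_iter_base (q : ℤ) (hq : 0 ≤ q) (j : ℕ) (hj : (j : ℤ) ≤ (n:ℤ) - 2) :
    (fc m n)^[j] (q * tt m n) = q * tt m n + j := by
  induction j with
  | zero => simp
  | succ i ih =>
      rw [Function.iterate_succ_apply', ih (by push_cast at hj ⊢; omega)]
      have := fc_low hm hn q i hq (by positivity) (by push_cast at hj ⊢; omega)
      rw [this]; push_cast; ring

lemma fc_iter_n_neg (q : ℤ) (hq : 0 ≤ q) : (fc m n)^[n] (-q - 1) = -q - 1 := by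
  have key : (fc m n)^[((n-2) + 1) + 1] (-q - 1) = -q - 1 := by
    rw [Function.iterate_succ_apply', Function.iterate_succ_apply,
      fc_neg q hq, fc_iter_base hm hn q hq (n-2) (by push_cast; omega)]
    have h2 : q * tt m n + ((n : ℕ) - 2 : ℕ) = q * tt m n + ((n:ℤ) - 2) := by
      push_cast; omega
    rw [h2, fc_mid hm hn q hq]
  rw [show ((n-2) + 1) + 1 = n from by omega] at key
  exact key

omit hm hn in
lemma iter_fix_orbit {α : Type*} (f : α → α) (M i : ℕ) (x0 : α) (h : f^[M] x0 = x0) :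
    f^[M] (f^[i] x0) = f^[i] x0 := by
  rw [← Function.iterate_add_apply, Nat.add_comm, Function.iterate_add_apply, h]

lemma fc_iter_n (k : ℤ) : (fc m n)^[n] k = k := by
  rcases lt_or_ge k 0 with hk | hk
  · have := fc_iter_n_neg hm hn (-k - 1) (by omega)
    simpa using this
  · have ht1 := ht hm hn
    have hmod : 0 ≤ k % tt m n := Int.emod_nonneg k (by omega)
    have hmod2 : k % tt m n < tt m n := Int.emod_lt_of_pos k (by omega)
    rcases le_or_gt (k % tt m n) ((n:ℤ) - 2) with hr | hr
    · have hq : 0 ≤ k / tt m n := Int.ediv_nonneg hk (by omega)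
      have hkeq : k = (k / tt m n) * tt m n + k % tt m n := by
        rw [mul_comm]; exact (Int.mul_ediv_add_emod k (tt m n)).symm
      have hrr : ((k % tt m n).toNat : ℤ) = k % tt m n := by omega
      have h1 : k = (fc m n)^[(k % tt m n).toNat + 1] (-(k / tt m n) - 1) := by
        rw [Function.iterate_succ_apply, fc_neg (k / tt m n) hq,
          fc_iter_base hm hn (k / tt m n) hq _ (by omega)]
        omega
      rw [h1, iter_fix_orbit _ n _ _ (fc_iter_n_neg hm hn (k / tt m n) hq)]
    · rw [Function.iterate_fixed (fc_high k hk hr) n]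

-- fb lemmas
omit hm hn in
lemma fb_neg (q : ℤ) (hq : 0 ≤ q) : fb m n (-q - 1) = q * tt m n + ((n:ℤ) - 1) := by
  unfold fb
  rw [if_pos (by omega)]
  ring_nf

lemma fb_high (q r : ℤ) (hq : 0 ≤ q) (hr : (n:ℤ) - 1 ≤ r) (hr2 : r < tt m n) :
    fb m n (q * tt m n + r) = q * tt m n + r + 1 := by
  have hr0 : 0 ≤ r := by omega
  have hk : ¬ (q * tt m n + r < 0) := by nlinarith [ht hm hn]
  unfold fb
  rw [if_neg hk, qtr_emod hm hn q r hr0 hr2, if_pos hr]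

lemma fb_mult (q : ℤ) (hq : 0 ≤ q) : fb m n ((q + 1) * tt m n) = -q - 1 := by
  have ht1 := ht hm hn
  have hk : ¬ ((q+1) * tt m n < 0) := by nlinarith
  have hmod : ((q+1) * tt m n) % tt m n = 0 := Int.mul_emod_left _ _
  have hdiv : ((q+1) * tt m n) / tt m n = q + 1 := Int.mul_ediv_cancel _ (by omega)
  unfold fb
  rw [if_neg hk, hmod, if_neg (by omega), if_pos ⟨rfl, by nlinarith⟩, hdiv]
  ring

omit hm hn in
lemma fb_fix (k : ℤ) (hk : 0 ≤ k) (h1 : k % tt m n < (n:ℤ) - 1)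
    (h2 : ¬ (k % tt m n = 0 ∧ 0 < k)) : fb m n k = k := by
  unfold fb
  rw [if_neg (by omega), if_neg (by omega), if_neg h2]

lemma fb_iter_base (q : ℤ) (hq : 0 ≤ q) (j : ℕ) (hj : (j : ℤ) ≤ (m:ℤ) - 2) :
    (fb m n)^[j] (q * tt m n + ((n:ℤ) - 1)) = q * tt m n + ((n:ℤ) - 1) + j := by
  induction j with
  | zero => simp
  | succ i ih =>
      rw [Function.iterate_succ_apply', ih (by push_cast at hj ⊢; omega)]
      rw [show q * tt m n + ((n:ℤ)-1) + (i:ℤ) = q * tt m n + (((n:ℤ)-1) + i) by ring,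
        fb_high hm hn q _ hq (by omega) (by unfold tt; push_cast at hj ⊢; omega)]
      push_cast; ring

lemma fb_iter_m_neg (q : ℤ) (hq : 0 ≤ q) : (fb m n)^[m] (-q - 1) = -q - 1 := by
  have key : (fb m n)^[((m-2) + 1) + 1] (-q - 1) = -q - 1 := by
    rw [Function.iterate_succ_apply', Function.iterate_succ_apply,
      fb_neg q hq, fb_iter_base hm hn q hq (m-2) (by push_cast; omega)]
    have h2 : q * tt m n + ((n:ℤ) - 1) + ((m : ℕ) - 2 : ℕ) = (q + 1) * tt m n := by
      rw [show (((m:ℕ) - 2 : ℕ) : ℤ) = ((m:ℤ) - 2) from by omega]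
      unfold tt; ring
    rw [h2, fb_mult hm hn q hq]
  rw [show ((m-2) + 1) + 1 = m from by omega] at key
  exact key

lemma fb_iter_m (k : ℤ) : (fb m n)^[m] k = k := by
  rcases lt_or_ge k 0 with hk | hk
  · have := fb_iter_m_neg hm hn (-k - 1) (by omega)
    simpa using this
  · have ht1 := ht hm hn
    have hmod : 0 ≤ k % tt m n := Int.emod_nonneg k (by omega)
    have hmod2 : k % tt m n < tt m n := Int.emod_lt_of_pos k (by omega)
    have hq : 0 ≤ k / tt m n := Int.ediv_nonneg hk (by omega)
    have hkeq : k = (k / tt m n) * tt m n + k % tt m n := by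
      rw [mul_comm]; exact (Int.mul_ediv_add_emod k (tt m n)).symm
    rcases le_or_gt ((n:ℤ) - 1) (k % tt m n) with hr | hr
    · have hjz : ((k % tt m n - ((n:ℤ) - 1)).toNat : ℤ) = k % tt m n - ((n:ℤ)-1) := by omega
      have h1 : k = (fb m n)^[(k % tt m n - ((n:ℤ) - 1)).toNat + 1] (-(k / tt m n) - 1) := by
        rw [Function.iterate_succ_apply, fb_neg (k / tt m n) hq,
          fb_iter_base hm hn (k / tt m n) hq _ (by unfold tt at *; omega)]
        omega
      rw [h1, iter_fix_orbit _ m _ _ (fb_iter_m_neg hm hn (k / tt m n) hq)]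
    · rcases em (k % tt m n = 0 ∧ 0 < k) with hc | hc
      · obtain ⟨hc1, hc2⟩ := hc
        have hq1 : 1 ≤ k / tt m n := by
          rcases eq_or_lt_of_le hq with h | h
          · exfalso
            have hk0 : k = 0 := by rw [hkeq, ← h, zero_mul, hc1]; ring
            omega
          · omega
        have h1 : k = (fb m n)^[(m - 2) + 1] (-(k / tt m n - 1) - 1) := by
          rw [Function.iterate_succ_apply, fb_neg (k / tt m n - 1) (by omega),
            fb_iter_base hm hn (k / tt m n - 1) (by omega) (m-2) (by push_cast; omega)]
          have h3 : (k / tt m n - 1) * tt m n + ((n:ℤ) - 1) + ((m:ℕ) - 2 : ℕ)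
              = (k / tt m n) * tt m n := by
            rw [show (((m:ℕ) - 2 : ℕ) : ℤ) = ((m:ℤ) - 2) from by omega]
            unfold tt; ring
          omega
        rw [h1, iter_fix_orbit _ m _ _ (fb_iter_m_neg hm hn (k / tt m n - 1) (by omega))]
      · rw [Function.iterate_fixed (fb_fix k hk hr hc) m]

lemma fb_fc (k : ℤ) : fb m n (fc m n k) = k + 1 := by
  have ht1 := ht hm hn
  rcases lt_or_ge k 0 with hk | hk
  · rw [show k = -(-k-1) - 1 by ring, fc_neg (-k-1) (by omega)]
    rcases eq_or_lt_of_le (show (0:ℤ) ≤ -k-1 by omega) with h1 | h1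
    · rw [← h1, zero_mul]
      rw [fb_fix 0 le_rfl (by simpa using by omega) (by simp)]
      omega
    · rw [show (-k-1) * tt m n = (-k-2+1) * tt m n by ring, fb_mult hm hn (-k-2) (by omega)]
      ring
  · have hmod : 0 ≤ k % tt m n := Int.emod_nonneg k (by omega)
    have hmod2 : k % tt m n < tt m n := Int.emod_lt_of_pos k (by omega)
    have hq : 0 ≤ k / tt m n := Int.ediv_nonneg hk (by omega)
    have hkeq : k = (k / tt m n) * tt m n + k % tt m n := by
      rw [mul_comm]; exact (Int.mul_ediv_add_emod k (tt m n)).symm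
    rcases lt_trichotomy (k % tt m n) ((n:ℤ) - 2) with h1 | h1 | h1
    · rw [hkeq, fc_low hm hn _ _ hq hmod h1,
        show (k / tt m n) * tt m n + k % tt m n + 1 = (k / tt m n) * tt m n + (k % tt m n + 1) by ring,
        fb_fix _ (by nlinarith) ?_ ?_]
      · rw [qtr_emod hm hn _ _ (by omega) (by unfold tt at *; omega)]
        omega
      · rw [qtr_emod hm hn _ _ (by omega) (by unfold tt at *; omega)]
        push_neg
        intro h
        omega
    · rw [hkeq, h1, fc_mid hm hn _ hq, fb_neg (k / tt m n) hq]
      omega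
    · rw [fc_high k hk h1, hkeq, fb_high hm hn _ _ hq (by omega) hmod2]

end core

/-- generic: a function whose N-th iterate is the identity gives a permutation -/
def permOfIter (f : ℤ → ℤ) (N : ℕ) (hN : 1 ≤ N) (h : ∀ k, f^[N] k = k) : Equiv.Perm ℤ where
  toFun := f
  invFun := f^[N-1]
  left_inv := fun x => by
    have h2 : f^[N-1] (f x) = f^[(N-1)+1] x := (Function.iterate_succ_apply _ _ _).symm
    rw [h2, show (N-1)+1 = N from by omega]; exact h x
  right_inv := fun x => by
    have h2 : f (f^[N-1] x) = f^[(N-1)+1] x := (Function.iterate_succ_apply' _ _ _).symm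
    rw [h2, show (N-1)+1 = N from by omega]; exact h x

lemma permOfIter_pow (f : ℤ → ℤ) (N : ℕ) (hN : 1 ≤ N) (h : ∀ k, f^[N] k = k) :
    (permOfIter f N hN h) ^ N = 1 := by
  ext x
  rw [← Equiv.Perm.iterate_eq_pow]
  exact h x

lemma permOfIter_apply (f : ℤ → ℤ) (N : ℕ) (hN : 1 ≤ N) (h : ∀ k, f^[N] k = k) (x : ℤ) :
    (permOfIter f N hN h) x = f x := rfl

/-- KEY existence lemma -/
lemma key (m n : ℕ) (hm : m ≠ 1) (hn : n ≠ 1) :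
    ∃ b c : Equiv.Perm ℤ, b ^ m = 1 ∧ c ^ n = 1 ∧ ∀ x, b (c x) = x + 1 := by
  rcases Nat.eq_zero_or_pos m with hm0 | hm1
  · rcases Nat.eq_zero_or_pos n with hn0 | hn1
    · exact ⟨Equiv.addRight 1, 1, by rw [hm0, pow_zero], by rw [hn0, pow_zero],
        fun x => rfl⟩
    · have hn2 : 2 ≤ n := by omega
      set c := permOfIter (fc 2 n) n (by omega) (fc_iter_n (le_rfl) hn2) with hc
      set b0 := permOfIter (fb 2 n) 2 (by omega) (fb_iter_m (le_rfl : 2 ≤ 2) hn2) with hb0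
      refine ⟨b0 * c * c⁻¹, c, by rw [hm0, pow_zero],
        permOfIter_pow _ _ _ _, fun x => ?_⟩
      simp only [Equiv.Perm.coe_mul, Function.comp_apply, Equiv.Perm.coe_inv, Equiv.symm_apply_apply]
      exact fb_fc (le_rfl : 2 ≤ 2) hn2 x
  · rcases Nat.eq_zero_or_pos n with hn0 | hn1
    · have hm2 : 2 ≤ m := by omega
      set b := permOfIter (fb m 2) m (by omega) (fb_iter_m hm2 (le_rfl : 2 ≤ 2)) with hb
      set c0 := permOfIter (fc m 2) 2 (by omega) (fc_iter_n hm2 (le_rfl : 2 ≤ 2)) with hc0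
      refine ⟨b, b⁻¹ * (b * c0), by exact permOfIter_pow _ _ _ _,
        by rw [hn0, pow_zero], fun x => ?_⟩
      simp only [Equiv.Perm.coe_mul, Function.comp_apply, Equiv.Perm.coe_inv, Equiv.apply_symm_apply]
      exact fb_fc hm2 (le_rfl : 2 ≤ 2) x
    · have hm2 : 2 ≤ m := by omega
      have hn2 : 2 ≤ n := by omega
      exact ⟨permOfIter (fb m n) m (by omega) (fb_iter_m hm2 hn2),
      permOfIter (fc m n) n (by omega) (fc_iter_n hm2 hn2),
      permOfIter_pow _ _ _ _, permOfIter_pow _ _ _ _,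
      fun x => fb_fc hm2 hn2 x⟩

/-- roots of the shift are trivial -/
lemma shift_rootless (σ y : Equiv.Perm ℤ) (hσ : ∀ x, σ x = x + 1) (p : ℕ) (hp : 1 ≤ p)
    (h : y ^ p = σ) : p = 1 := by
  have hcomm : y * σ = σ * y := by
    rw [← h, ← pow_succ', ← pow_succ]
  have hstep : ∀ x : ℤ, y (x + 1) = y x + 1 := by
    intro x
    have h1 : (y * σ) x = (σ * y) x := by rw [hcomm]
    simpa [Equiv.Perm.mul_apply, hσ] using h1
  have haff : ∀ x : ℤ, y x = x + y 0 := by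
    intro x
    induction x using Int.induction_on with
    | zero => ring_nf
    | succ i ih => rw [hstep i, ih]; ring
    | pred i ih =>
        have := hstep (-(i:ℤ) - 1)
        rw [show -(i:ℤ) - 1 + 1 = -(i:ℤ) from by ring] at this
        omega
  have hpow : ∀ j : ℕ, (y ^ j) 0 = j * y 0 := by
    intro j
    induction j with
    | zero => simp
    | succ i ih =>
        rw [pow_succ', Equiv.Perm.mul_apply, ih, haff ((i:ℤ) * y 0)]
        push_cast; ring
  have h1 : (p : ℤ) * y 0 = 1 := by
    rw [← hpow p, h, hσ 0, zero_add]
  have := Int.isUnit_iff.mp (IsUnit.of_mul_eq_one _ h1)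
  omega

/-- telescoping product -/
lemma telescope {G : Type*} [Group G] : ∀ (d : ℕ) (γ : ℕ → G),
    (List.ofFn (fun i : Fin d => (γ i.val)⁻¹ * γ (i.val + 1))).prod = (γ 0)⁻¹ * γ d := by
  intro d
  induction d with
  | zero => intro γ; simp
  | succ e ih =>
      intro γ
      rw [List.ofFn_succ, List.prod_cons]
      have h2 := ih (fun t => γ (t + 1))
      simp only [Fin.val_succ, Fin.val_zero] at h2 ⊢
      rw [h2]
      group



def gam (a b c : ℕ) (v1 v2 : Equiv.Perm ℤ) (t : ℕ) : Equiv.Perm ℤ :=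
  if t ≤ a then 1 else if t ≤ b then v1 else if t ≤ c then v1 * v2 else 1

lemma gam_step (a b c t : ℕ) (hab : a < b) (hbc : b < c) (v1 v2 : Equiv.Perm ℤ) :
    (gam a b c v1 v2 t)⁻¹ * gam a b c v1 v2 (t + 1) =
      if t = a then v1 else if t = b then v2 else if t = c then (v1 * v2)⁻¹ else 1 := by
  unfold gam
  split_ifs <;> first | (exfalso; omega) | group

lemma exists_hom (d : ℕ) (k : Fin d → ℕ) (p1 p2 p3 : Fin d) (h12 : p1 < p2) (h23 : p2 < p3)
    (v1 v2 v3 : Equiv.Perm ℤ) (hv : v1 * v2 * v3 = 1)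
    (h1 : v1 ^ k p1 = 1) (h2 : v2 ^ k p2 = 1) (h3 : v3 ^ k p3 = 1) :
    ∃ φ : PresentedGroup (altRels d k) →* Equiv.Perm ℤ,
      φ (PresentedGroup.of p1) = v1 ∧ φ (PresentedGroup.of p2) = v2 ∧
      φ (PresentedGroup.of p3) = v3 := by
  have hab : p1.val < p2.val := h12
  have hbc : p2.val < p3.val := h23
  have hv3 : (v1 * v2)⁻¹ = v3 := inv_eq_of_mul_eq_one_right hv
  set f : Fin d → Equiv.Perm ℤ :=
    fun i => (gam p1.val p2.val p3.val v1 v2 i.val)⁻¹ *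
      gam p1.val p2.val p3.val v1 v2 (i.val + 1) with hf
  have hfi : ∀ i : Fin d, f i = if i = p1 then v1 else if i = p2 then v2
      else if i = p3 then v3 else 1 := by
    intro i
    simp only [hf]
    rw [gam_step _ _ _ _ hab hbc, hv3]
    exact if_congr Fin.val_inj rfl (if_congr Fin.val_inj rfl (if_congr Fin.val_inj rfl rfl))
  have hcheck : ∀ r ∈ altRels d k, FreeGroup.lift f r = 1 := by
    rintro r (⟨i, rfl⟩ | rfl)
    · rw [map_pow, FreeGroup.lift_apply_of, hfi i]
      split_ifs with e1 e2 e3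
      · rw [e1]; exact h1
      · rw [e2]; exact h2
      · rw [e3]; exact h3
      · exact one_pow _
    · rw [map_list_prod, List.map_ofFn]
      have : (FreeGroup.lift f) ∘ (fun i : Fin d => FreeGroup.of i) = f := by
        funext i; exact FreeGroup.lift_apply_of
      rw [this, hf, telescope d]
      have g0 : gam p1.val p2.val p3.val v1 v2 0 = 1 := by
        unfold gam; rw [if_pos (by omega)]
      have gd : gam p1.val p2.val p3.val v1 v2 d = 1 := by
        have := p3.isLt
        unfold gam; rw [if_neg (by omega), if_neg (by omega), if_neg (by omega)]
      rw [g0, gd, inv_one, one_mul]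
  refine ⟨PresentedGroup.toGroup hcheck, ?_, ?_, ?_⟩
  · rw [PresentedGroup.toGroup.of, hfi, if_pos rfl]
  · rw [PresentedGroup.toGroup.of, hfi, if_neg (by exact (Fin.ne_of_lt h12).symm), if_pos rfl]
  · rw [PresentedGroup.toGroup.of, hfi, if_neg (by exact (Fin.ne_of_lt (h12.trans h23)).symm),
      if_neg (by exact (Fin.ne_of_lt h23).symm), if_pos rfl]


end Stmt3Aux

open Stmt3Aux

/-- Let `W_K⁺ = ⟨a_1,…,a_d ∣ a_i^{k_i} = 1 (k_i finite), a_1⋯a_d = 1⟩` with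
`d ≥ 3`, each `k_i ∈ ℕ≥2 ∪ {∞}` and some `k_j = ∞`.  Then `a_j` has no nontrivial roots:
if `x ^ n = a_j` with `n ≥ 1` then `n = 1`.  In particular `⟨a_j⟩` is a maximal cyclic
subgroup: every cyclic subgroup `⟨x⟩` containing `a_j` equals `⟨a_j⟩`. -/
theorem stmt3 (d : ℕ) (hd : 3 ≤ d) (k : Fin d → ℕ) (hk : ∀ i, k i ≠ 1)
    (j : Fin d) (hj : k j = 0) :
    (∀ (x : PresentedGroup (altRels d k)) (n : ℕ), 1 ≤ n →
      x ^ n = PresentedGroup.of j → n = 1) ∧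
    (∀ x : PresentedGroup (altRels d k),
      (PresentedGroup.of j : PresentedGroup (altRels d k)) ∈ Subgroup.zpowers x →
      Subgroup.zpowers x =
        Subgroup.zpowers (PresentedGroup.of j : PresentedGroup (altRels d k))) := by
  have H : ∃ φ : PresentedGroup (altRels d k) →* Equiv.Perm ℤ,
      ∀ x : ℤ, φ (PresentedGroup.of j) x = x + 1 := by
    rcases Nat.lt_or_ge j.val 1 with hj0 | hj1
    · -- j is the first index
      set p2 : Fin d := ⟨1, by omega⟩ with hp2
      set p3 : Fin d := ⟨2, by omega⟩ with hp3
      obtain ⟨b, c, hb, hc, hbc⟩ := key (k p3) (k p2) (hk p3) (hk p2)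
      obtain ⟨φ, hφ1, -, -⟩ := exists_hom d k j p2 p3
        (by rw [Fin.lt_def]; show j.val < 1; omega) (by rw [Fin.lt_def]; show 1 < 2; omega)
        (b * c) c⁻¹ b⁻¹ (by group)
        (by rw [hj, pow_zero]) (by rw [inv_pow, hc, inv_one]) (by rw [inv_pow, hb, inv_one])
      exact ⟨φ, fun x => by rw [hφ1, Equiv.Perm.mul_apply]; exact hbc x⟩
    · rcases Nat.lt_or_ge j.val 2 with hj1' | hj2
      · -- j is the middle index
        set p1 : Fin d := ⟨0, by omega⟩ with hp1
        set p3 : Fin d := ⟨2, by omega⟩ with hp3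
        obtain ⟨b, c, hb, hc, hbc⟩ := key (k p1) (k p3) (hk p1) (hk p3)
        obtain ⟨φ, -, hφ2, -⟩ := exists_hom d k p1 j p3
          (by rw [Fin.lt_def]; show 0 < j.val; omega) (by rw [Fin.lt_def]; show j.val < 2; omega)
          b⁻¹ (b * c) c⁻¹ (by group)
          (by rw [inv_pow, hb, inv_one]) (by rw [hj, pow_zero]) (by rw [inv_pow, hc, inv_one])
        exact ⟨φ, fun x => by rw [hφ2, Equiv.Perm.mul_apply]; exact hbc x⟩
      · -- j is the last index
        set p1 : Fin d := ⟨0, by omega⟩ with hp1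
        set p2 : Fin d := ⟨1, by omega⟩ with hp2
        obtain ⟨b, c, hb, hc, hbc⟩ := key (k p2) (k p1) (hk p2) (hk p1)
        obtain ⟨φ, -, -, hφ3⟩ := exists_hom d k p1 p2 j
          (by rw [Fin.lt_def]; show 0 < 1; omega) (by rw [Fin.lt_def]; show 1 < j.val; omega)
          c⁻¹ b⁻¹ (b * c) (by group)
          (by rw [inv_pow, hc, inv_one]) (by rw [inv_pow, hb, inv_one]) (by rw [hj, pow_zero])
        exact ⟨φ, fun x => by rw [hφ3, Equiv.Perm.mul_apply]; exact hbc x⟩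
  obtain ⟨φ, hσ⟩ := H
  have part1 : ∀ (x : PresentedGroup (altRels d k)) (p : ℕ), 1 ≤ p →
      x ^ p = PresentedGroup.of j → p = 1 := by
    intro x p hp hx
    exact shift_rootless (φ (PresentedGroup.of j)) (φ x) hσ p hp (by rw [← map_pow, hx])
  refine ⟨part1, ?_⟩
  intro x hx
  obtain ⟨z, hz⟩ := Subgroup.mem_zpowers_iff.mp hx
  rcases lt_trichotomy z 0 with hzneg | hz0 | hzpos
  · have h2 : (x⁻¹) ^ (-z).toNat = PresentedGroup.of j := by
      rw [← zpow_natCast, Int.toNat_of_nonneg (by omega), inv_zpow', neg_neg, hz]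
    have h3 := part1 x⁻¹ (-z).toNat (by omega) h2
    have hxinv : x⁻¹ = PresentedGroup.of j := by rw [← h2, h3, pow_one]
    rw [← hxinv, Subgroup.zpowers_inv]
  · exfalso
    rw [hz0, zpow_zero] at hz
    have h0 := hσ 0
    rw [← hz, map_one, Equiv.Perm.one_apply] at h0
    omega
  · have h2 : x ^ z.toNat = PresentedGroup.of j := by
      rw [← zpow_natCast, Int.toNat_of_nonneg (by omega), hz]
    have h3 := part1 x z.toNat (by omega) h2
    have hxx : x = PresentedGroup.of j := by rw [← h2, h3, pow_one]
    rw [hxx]
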